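/- arXiv:alg-geom/9605001 — 2 statements merged into one kernel-verified Lean document; each statement's English description precedes it below -/
import Mathlib

section
/- An O'-linear map f : O_K → K has image contained in O' if and only if f is multiplication by some element x ∈ ℘ = t·O_K; consequently the map sending x ∈ ℘ to multiplication-by-x is an isomorphism of O'-modules ℘ ≅ Hom_{O'}(O_K, O'). Moreover every O'-linear endomorphism of O_K is multiplication by a unique element of O_K, so Hom_{O'}(O_K, O_K) ≅ O_K. -/
set_option synthInstance.maxHeartbeats 1000000
set_option maxHeartbeats 1000000

noncomputable section

open HahnSeries

namespace TwoDimLocal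

variable (k : Type) [Field k]

/-- `k((u))`, the field of Laurent series over `k`. -/
abbrev K1 := LaurentSeries k

/-- `K = k((u))((t))`, the two-dimensional local field of iterated Laurent series. -/
abbrev K := LaurentSeries (LaurentSeries k)

section Nonneg

variable (F : Type) [Field F]

lemma order_nonneg_of_support {x : LaurentSeries F} (hx : x ≠ 0)
    (h : ∀ n : ℤ, n < 0 → x.coeff n = 0) : 0 ≤ x.order := by
  by_contra hlt
  push_neg at hlt
  exact hx (coeff_order_eq_zero.1 (h x.order hlt))

/-- The subring `F[[X]] ⊆ F((X))` of power series, described by vanishing of the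
coefficients of negative index. -/
def nonneg : Subring (LaurentSeries F) where
  carrier := {x | ∀ n : ℤ, n < 0 → x.coeff n = 0}
  zero_mem' := by intro n _; simp
  one_mem' := by
    intro n hn
    rw [HahnSeries.coeff_one, if_neg (by omega)]
  add_mem' := by
    intro a b ha hb n hn
    rw [HahnSeries.coeff_add, ha n hn, hb n hn, add_zero]
  neg_mem' := by
    intro a ha n hn
    rw [HahnSeries.coeff_neg, ha n hn, neg_zero]
  mul_mem' := by
    intro a b ha hb n hn
    by_contra hne
    obtain ⟨i, hi, j, hj, rfl⟩ := support_mul_subset ((mem_support _ _).2 hne)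
    rw [mem_support] at hi hj
    have hi0 : 0 ≤ i := by by_contra h; push_neg at h; exact hi (ha i h)
    have hj0 : 0 ≤ j := by by_contra h; push_neg at h; exact hj (hb j h)
    exact absurd hn (not_lt.2 (add_nonneg hi0 hj0))

lemma mem_nonneg_iff {x : LaurentSeries F} :
    x ∈ nonneg F ↔ ∀ n : ℤ, n < 0 → x.coeff n = 0 := Iff.rfl

lemma coeff_zero_mul {x y : LaurentSeries F} (hx : x ∈ nonneg F) (hy : y ∈ nonneg F) :
    (x * y).coeff 0 = x.coeff 0 * y.coeff 0 := by
  rcases eq_or_ne x 0 with rfl | hx0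
  · simp
  rcases eq_or_ne y 0 with rfl | hy0
  · simp
  have hxo : 0 ≤ x.order := order_nonneg_of_support F hx0 hx
  have hyo : 0 ≤ y.order := order_nonneg_of_support F hy0 hy
  rcases lt_or_eq_of_le hxo with hxo' | hxo'
  · have h1 : x.coeff 0 = 0 := HahnSeries.coeff_eq_zero_of_lt_order hxo'
    have h2 : (x * y).coeff 0 = 0 := by
      apply HahnSeries.coeff_eq_zero_of_lt_order
      rw [HahnSeries.order_mul hx0 hy0]
      omega
    rw [h1, h2, zero_mul]
  rcases lt_or_eq_of_le hyo with hyo' | hyo'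
  · have h1 : y.coeff 0 = 0 := HahnSeries.coeff_eq_zero_of_lt_order hyo'
    have h2 : (x * y).coeff 0 = 0 := by
      apply HahnSeries.coeff_eq_zero_of_lt_order
      rw [HahnSeries.order_mul hx0 hy0]
      omega
    rw [h1, h2, mul_zero]
  have := HahnSeries.coeff_mul_order_add_order x y
  rw [HahnSeries.leadingCoeff_eq, HahnSeries.leadingCoeff_eq, ← hxo', ← hyo'] at this
  simpa using this

end Nonneg

/-- The ring of integers `O_K = k((u))[[t]]` of `K` with respect to the `t`-adic valuation. -/
def OK : Subring (K k) := nonneg (K1 k)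

/-- The rank-2 valuation subring `O' = p⁻¹(k[[u]]) ⊆ K`, consisting of those `t`-adic
integers whose constant `t`-coefficient is a power series in `u`. -/
def Oprime : Subring (K k) where
  carrier := {x | x ∈ OK k ∧ x.coeff 0 ∈ nonneg k}
  zero_mem' := ⟨Subring.zero_mem _, by simp⟩
  one_mem' := ⟨Subring.one_mem _, by
    intro n hn
    rw [show ((1 : K k).coeff 0) = 1 from by rw [HahnSeries.coeff_one]; simp]
    rw [HahnSeries.coeff_one, if_neg (by omega)]⟩
  add_mem' := by
    rintro a b ⟨ha1, ha2⟩ ⟨hb1, hb2⟩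
    refine ⟨Subring.add_mem _ ha1 hb1, ?_⟩
    rw [HahnSeries.coeff_add]
    exact Subring.add_mem _ ha2 hb2
  neg_mem' := by
    rintro a ⟨ha1, ha2⟩
    refine ⟨Subring.neg_mem _ ha1, ?_⟩
    rw [HahnSeries.coeff_neg]
    exact Subring.neg_mem _ ha2
  mul_mem' := by
    rintro a b ⟨ha1, ha2⟩ ⟨hb1, hb2⟩
    refine ⟨Subring.mul_mem _ ha1 hb1, ?_⟩
    rw [coeff_zero_mul (K1 k) ha1 hb1]
    exact Subring.mul_mem _ ha2 hb2

lemma Oprime_le_OK : (Oprime k : Set (K k)) ⊆ (OK k : Set (K k)) := fun _ h => h.1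

/-- The local parameter `t` of `K = k((u))((t))`. -/
def t : K k := HahnSeries.single (1 : ℤ) 1

/-- The local parameter `u` of `K = k((u))((t))`, i.e. the image in `K` of the
local parameter of `k((u))`. -/
def u : K k := HahnSeries.C (HahnSeries.single (1 : ℤ) (1 : k))

/-- The maximal ideal `m = p⁻¹(u·k[[u]])` of `O'`, as a subset of `K`. -/
def mSet : Set (K k) := {x | x ∈ Oprime k ∧ (x.coeff 0).coeff 0 = 0}

/-- The rank-two valuation `ν' : K* → ℤ ×ₗ ℤ`: the first component is the `t`-adic order,
the second one the `u`-adic order of the leading `t`-coefficient. (Junk value at `0`.) -/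
def nu (x : K k) : ℤ ×ₗ ℤ := toLex (x.order, (x.coeff x.order).order)

end TwoDimLocal

namespace TwoDimLocal

variable (k : Type) [Field k]

/-- `O_K` viewed as an `O'`-submodule of `K`. -/
def OKmod : Submodule (Oprime k) (K k) where
  carrier := OK k
  zero_mem' := Subring.zero_mem _
  add_mem' := fun ha hb => Subring.add_mem _ ha hb
  smul_mem' := by
    intro c x hx
    show (c : K k) • x ∈ OK k
    rw [smul_eq_mul]
    exact Subring.mul_mem _ c.2.1 hx

-- auxiliary lemmas to be inserted before the theorem

lemma mem_OKmod_iff (x : K k) : x ∈ OKmod k ↔ x ∈ OK k := Iff.rfl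

lemma one_mem_OKmod : (1 : K k) ∈ OKmod k := Subring.one_mem (OK k)

/-- The element `1` of `O_K` as an element of the module. -/
def oneOK : ↥(OKmod k) := ⟨1, one_mem_OKmod k⟩

lemma smul_def' (c : Oprime k) (x : K k) : c • x = (c : K k) * x := rfl

/-- Clearing denominators: every element of `O_K` becomes an element of `O'` after
multiplying by a suitable nonzero element of `O'` (a power of `u`). -/
lemma exists_denom (y : K k) (hy : y ∈ OK k) :
    ∃ a : K k, a ∈ Oprime k ∧ a ≠ 0 ∧ a * y ∈ Oprime k := by
  set g : K1 k := y.coeff 0 with hg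
  set N : ℤ := max 0 (-g.order) with hN
  have hN0 : 0 ≤ N := le_max_left _ _
  have hgc : ∀ j : ℤ, j < -N → g.coeff j = 0 := by
    intro j hj
    apply HahnSeries.coeff_eq_zero_of_lt_order
    have : -N ≤ g.order := by
      have := le_max_right 0 (-g.order)
      omega
    omega
  refine ⟨HahnSeries.single (0 : ℤ) (HahnSeries.single N (1 : k)), ?_, ?_, ?_⟩
  · constructor
    · intro n hn
      rw [HahnSeries.coeff_single_of_ne (by omega)]
    · rw [HahnSeries.coeff_single_same]
      intro m hm
      rw [HahnSeries.coeff_single_of_ne (by omega)]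
  · exact HahnSeries.single_ne_zero (HahnSeries.single_ne_zero one_ne_zero)
  · constructor
    · intro n hn
      rw [HahnSeries.coeff_single_zero_mul, hy n hn, mul_zero]
    · rw [HahnSeries.coeff_single_zero_mul]
      intro m hm
      have : (HahnSeries.single N (1 : k) * g).coeff (m - N + N) =
          1 * g.coeff (m - N) := HahnSeries.coeff_single_mul_add
      rw [show m - N + N = m by ring, one_mul] at this
      rw [← hg, this, hgc _ (by omega)]

/-- Every `O'`-linear map `O_K → K` is multiplication by its value at `1`. -/
lemma key_mul (f : ↥(OKmod k) →ₗ[Oprime k] K k) (y : ↥(OKmod k)) :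
    f y = f (oneOK k) * (y : K k) := by
  obtain ⟨a, haO, ha0, hayO⟩ := exists_denom k (y : K k) y.2
  set c : Oprime k := ⟨a, haO⟩
  set d : Oprime k := ⟨a * (y : K k), hayO⟩
  have h1 : c • y = d • (oneOK k) := by
    apply Subtype.ext
    show a * (y : K k) = (a * (y : K k)) * 1
    ring
  have h2 : c • f y = d • f (oneOK k) := by
    rw [← f.map_smul, ← f.map_smul, h1]
  rw [smul_def', smul_def'] at h2
  have h3 : a * f y = a * (f (oneOK k) * (y : K k)) := by
    rw [h2]; show (a * (y : K k)) * _ = _; ring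
  have h4 : a⁻¹ * (a * f y) = a⁻¹ * (a * (f (oneOK k) * (y : K k))) := by rw [h3]
  rwa [← mul_assoc (G := K k), ← mul_assoc (G := K k), inv_mul_cancel₀ (G₀ := K k) ha0,
    one_mul (M := K k), one_mul (M := K k)] at h4

/-- `t · O_K ⊆ O'`. -/
lemma t_mul_mem_Oprime (z : K k) (hz : z ∈ OK k) : t k * z ∈ Oprime k := by
  have htOK : t k ∈ OK k := by
    intro n hn
    rw [t, HahnSeries.coeff_single_of_ne (by omega)]
  refine ⟨Subring.mul_mem _ htOK hz, ?_⟩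
  have h0 : (t k * z).coeff ((-1 : ℤ) + 1) = 1 * z.coeff (-1) :=
    HahnSeries.coeff_single_mul_add
  rw [show (-1 : ℤ) + 1 = 0 by ring, one_mul, hz (-1) (by omega)] at h0
  rw [h0]
  intro m _; simp

/-- If `x ∈ O_K` has vanishing constant `t`-coefficient then `x ∈ t·O_K`. -/
lemma mem_t_mul (x : K k) (hx : x ∈ OK k) (hx0 : x.coeff 0 = 0) :
    ∃ z ∈ OK k, x = t k * z := by
  refine ⟨HahnSeries.single (-1 : ℤ) (1 : K1 k) * x, ?_, ?_⟩
  · intro m hm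
    have h1 : (HahnSeries.single (-1 : ℤ) (1 : K1 k) * x).coeff (m + 1 + -1) =
        1 * x.coeff (m + 1) := HahnSeries.coeff_single_mul_add
    rw [show m + 1 + -1 = m by ring, one_mul] at h1
    rw [h1]
    rcases lt_or_eq_of_le (show m + 1 ≤ 0 by omega) with h | h
    · exact hx _ h
    · rw [h, hx0]
  · ext n
    have h1 : (t k * (HahnSeries.single (-1 : ℤ) (1 : K1 k) * x)).coeff (n - 1 + 1)
        = 1 * (HahnSeries.single (-1 : ℤ) (1 : K1 k) * x).coeff (n - 1) :=
      HahnSeries.coeff_single_mul_add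
    have h2 : (HahnSeries.single (-1 : ℤ) (1 : K1 k) * x).coeff (n + -1)
        = 1 * x.coeff n := HahnSeries.coeff_single_mul_add
    rw [show n - 1 + 1 = n by ring] at h1
    rw [show n + -1 = n - 1 by ring] at h2
    rw [h1, h2, one_mul (M := K1 k), one_mul (M := K1 k)]


/-- An `O'`-linear map `f : O_K → K` has image in `O'` iff it is
multiplication by a (unique) element of `℘ = t·O_K`; hence `Hom_{O'}(O_K, O') ≅ ℘`.
Moreover an `O'`-linear map `f : O_K → K` has image in `O_K` iff it is multiplication
by a unique element of `O_K`; hence `Hom_{O'}(O_K, O_K) ≅ O_K`. -/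
theorem hom_OK_to_O_iso_wp :
    (∀ f : ↥(OKmod k) →ₗ[Oprime k] K k,
      (∀ y, f y ∈ Oprime k) ↔
        ∃! x : K k, (∃ z ∈ OK k, x = t k * z) ∧ ∀ y : ↥(OKmod k), f y = x * (y : K k)) ∧
    (∀ f : ↥(OKmod k) →ₗ[Oprime k] K k,
      (∀ y, f y ∈ OK k) ↔
        ∃! x : K k, x ∈ OK k ∧ ∀ y : ↥(OKmod k), f y = x * (y : K k)) := by
  have key := key_mul k
  constructor
  · intro f
    constructor
    · intro h
      refine ⟨f (oneOK k), ⟨?_, fun y => key f y⟩, ?_⟩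
      · -- f 1 ∈ t·O_K
        have h1 : f (oneOK k) ∈ Oprime k := h _
        apply mem_t_mul k _ h1.1
        -- constant coefficient vanishes
        set g : K1 k := (f (oneOK k)).coeff 0 with hg
        ext j
        rw [HahnSeries.coeff_zero]
        -- test against u^{-(j+1)}
        set N : ℤ := j + 1 with hNdef
        have hyOK : (HahnSeries.single (0 : ℤ) (HahnSeries.single (-N) (1 : k)) : K k) ∈ OK k := by
          intro n hn
          rw [HahnSeries.coeff_single_of_ne (by omega)]
        have h2 := h ⟨_, hyOK⟩
        rw [key f ⟨_, hyOK⟩] at h2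
        have h3 := h2.2
        rw [show ((⟨_, hyOK⟩ : ↥(OKmod k)) : K k) =
          HahnSeries.single (0 : ℤ) (HahnSeries.single (-N) (1 : k)) from rfl] at h3
        rw [HahnSeries.coeff_mul_single_zero] at h3
        have h4 := h3 (j + -N) (by omega)
        have h5 : (g * HahnSeries.single (-N) (1 : k)).coeff (j + -N) =
            g.coeff j * 1 := HahnSeries.coeff_mul_single_add
        rw [← hg, h5, mul_one] at h4
        exact h4
      · rintro x' ⟨-, hx'⟩
        have := hx' (oneOK k)
        rw [key f (oneOK k)] at this
        show x' = f (oneOK k)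
        have h1 : ((oneOK k : ↥(OKmod k)) : K k) = 1 := rfl
        rw [h1, mul_one (M := K k), mul_one (M := K k)] at this
        exact this.symm
    · rintro ⟨x, ⟨⟨z, hz, rfl⟩, hx⟩, -⟩ y
      rw [hx y, mul_assoc (G := K k)]
      exact t_mul_mem_Oprime k _ (Subring.mul_mem _ hz y.2)
  · intro f
    constructor
    · intro h
      refine ⟨f (oneOK k), ⟨h _, fun y => key f y⟩, ?_⟩
      rintro x' ⟨-, hx'⟩
      have := hx' (oneOK k)
      rw [key f (oneOK k)] at this
      show x' = f (oneOK k)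
      have h1 : ((oneOK k : ↥(OKmod k)) : K k) = 1 := rfl
      rw [h1, mul_one (M := K k), mul_one (M := K k)] at this
      exact this.symm
    · rintro ⟨x, ⟨hxOK, hx⟩, -⟩ y
      rw [hx y]
      exact Subring.mul_mem _ hxOK y.2


end TwoDimLocal
end
end

section
/- For n = 2 the Weyl group W = N/T has the presentation W = ⟨w₀, w₁, w₂ | w₀² = w₁² = w₂² = e, (w₀w₁w₂)² = e⟩: the homomorphism from the presented group on generators x₀, x₁, x₂ with relations x₀², x₁², x₂², (x₀x₁x₂)² to W sending x₀, x₁, x₂ to the classes of the matrices w₀ = [[0,1],[−1,0]], w₁ = [[0,t],[−t⁻¹,0]], w₂ = [[0,u],[−u⁻¹,0]] respectively is a group isomorphism. -/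
set_option synthInstance.maxHeartbeats 1000000
set_option maxHeartbeats 1000000

noncomputable section

open HahnSeries

namespace TwoDimLocal

open Matrix


open Matrix

section Generic

variable (F : Type) [Field F] (n : ℕ)

variable {F n} in
lemma mul_entry {A B : Matrix (Fin n) (Fin n) F} {σ : Equiv.Perm (Fin n)}
    (hA : ∀ i j, j ≠ σ i → A i j = 0) (i j : Fin n) :
    (A * B) i j = A i (σ i) * B (σ i) j := by
  rw [Matrix.mul_apply]
  refine Finset.sum_eq_single (σ i) (fun l _ hl => ?_) (fun h => absurd (Finset.mem_univ _) h)
  rw [hA i l hl, zero_mul]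

variable {F n} in
lemma mul_inv_entry (g : SpecialLinearGroup (Fin n) F) {σ : Equiv.Perm (Fin n)}
    (hσ2 : ∀ i j, j ≠ σ i → g.val i j = 0) (i j : Fin n) :
    g.val i (σ i) * (g⁻¹ : SpecialLinearGroup (Fin n) F).val (σ i) j
      = (1 : Matrix (Fin n) (Fin n) F) i j := by
  have h : g.val * (g⁻¹ : SpecialLinearGroup (Fin n) F).val = 1 := by
    rw [← Matrix.SpecialLinearGroup.coe_mul, mul_inv_cancel, Matrix.SpecialLinearGroup.coe_one]
  rw [← mul_entry hσ2 i j, h]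

/-- The subgroup of monomial matrices in `SL(n, F)`. -/
def monomialSubgroup : Subgroup (SpecialLinearGroup (Fin n) F) where
  carrier := {g | ∃ σ : Equiv.Perm (Fin n),
    (∀ i, g.val i (σ i) ≠ 0) ∧ ∀ i j, j ≠ σ i → g.val i j = 0}
  one_mem' := by
    refine ⟨1, fun i => ?_, fun i j hj => ?_⟩
    · simp
    · exact Matrix.one_apply_ne' hj
  mul_mem' := by
    rintro g h ⟨σ, hσ1, hσ2⟩ ⟨τ, hτ1, hτ2⟩
    have hmul : ∀ i j, (g * h).val i j = g.val i (σ i) * h.val (σ i) j := by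
      intro i j
      rw [Matrix.SpecialLinearGroup.coe_mul]
      exact mul_entry hσ2 i j
    refine ⟨σ.trans τ, fun i => ?_, fun i j hj => ?_⟩
    · rw [show (σ.trans τ) i = τ (σ i) from rfl, hmul]
      exact mul_ne_zero (hσ1 i) (hτ1 (σ i))
    · rw [hmul, hτ2 (σ i) j hj, mul_zero]
  inv_mem' := by
    rintro g ⟨σ, hσ1, hσ2⟩
    refine ⟨σ⁻¹, fun l => ?_, fun l j hj => ?_⟩
    · have h := mul_inv_entry g hσ2 (σ⁻¹ l) (σ⁻¹ l)
      rw [show σ (σ⁻¹ l) = l from Equiv.apply_symm_apply σ l] at h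
      rw [Matrix.one_apply_eq] at h
      intro hzero
      rw [hzero, mul_zero] at h
      exact zero_ne_one h
    · have h := mul_inv_entry g hσ2 (σ⁻¹ l) j
      rw [show σ (σ⁻¹ l) = l from Equiv.apply_symm_apply σ l] at h
      rw [Matrix.one_apply_ne' hj] at h
      have hσ1' : g.val (σ⁻¹ l) l ≠ 0 := by
        have h2 := hσ1 (σ⁻¹ l)
        rwa [show σ (σ⁻¹ l) = l from Equiv.apply_symm_apply σ l] at h2
      rcases mul_eq_zero.1 h with h' | h'
      · exact absurd h' hσ1'
      · exact h'

variable (R : Subring F)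

/-- The subgroup `T` of diagonal matrices with diagonal entries invertible in `R`,
inside the monomial subgroup `N`. -/
def diagTSubgroup : Subgroup ↥(monomialSubgroup F n) where
  carrier := {g | (∀ i j : Fin n, i ≠ j → (g : SpecialLinearGroup (Fin n) F).val i j = 0) ∧
    ∀ i : Fin n, (g : SpecialLinearGroup (Fin n) F).val i i ∈ R ∧
      ∃ w ∈ R, (g : SpecialLinearGroup (Fin n) F).val i i * w = 1}
  one_mem' := by
    constructor
    · intro i j hij
      show (1 : Matrix (Fin n) (Fin n) F) i j = 0
      exact Matrix.one_apply_ne hij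
    · intro i
      have h1 : ((1 : ↥(monomialSubgroup F n)) : SpecialLinearGroup (Fin n) F).val i i = 1 := by
        show (1 : Matrix (Fin n) (Fin n) F) i i = 1
        exact Matrix.one_apply_eq i
      rw [h1]
      exact ⟨Subring.one_mem _, 1, Subring.one_mem _, one_mul 1⟩
  mul_mem' := by
    rintro g h ⟨hg1, hg2⟩ ⟨hh1, hh2⟩
    have hσ2 : ∀ i j, j ≠ i → (g : SpecialLinearGroup (Fin n) F).val i j = 0 :=
      fun i j hj => hg1 i j (Ne.symm hj)
    have hmul : ∀ i j, ((g * h : ↥(monomialSubgroup F n)) : SpecialLinearGroup (Fin n) F).val i j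
        = (g : SpecialLinearGroup (Fin n) F).val i i
          * (h : SpecialLinearGroup (Fin n) F).val i j := by
      intro i j
      have : ((g * h : ↥(monomialSubgroup F n)) : SpecialLinearGroup (Fin n) F)
          = (g : SpecialLinearGroup (Fin n) F) * (h : SpecialLinearGroup (Fin n) F) := rfl
      rw [this, Matrix.SpecialLinearGroup.coe_mul]
      exact mul_entry (σ := 1) (fun i j hj => hσ2 i j (by simpa using hj)) i j
  -- here σ = 1 : Perm, σ i = i
    constructor
    · intro i j hij
      rw [hmul]
      rcases eq_or_ne i j with rfl | hij'
      · exact absurd rfl hij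
      · rw [hh1 i j hij', mul_zero]
    · intro i
      obtain ⟨wg, hwg, hwg1⟩ := (hg2 i).2
      obtain ⟨wh, hwh, hwh1⟩ := (hh2 i).2
      refine ⟨by rw [hmul]; exact Subring.mul_mem _ (hg2 i).1 (hh2 i).1,
        wg * wh, Subring.mul_mem _ hwg hwh, ?_⟩
      rw [hmul]
      calc (g : SpecialLinearGroup (Fin n) F).val i i
            * (h : SpecialLinearGroup (Fin n) F).val i i * (wg * wh)
          = ((g : SpecialLinearGroup (Fin n) F).val i i * wg)
            * ((h : SpecialLinearGroup (Fin n) F).val i i * wh) := by ring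
        _ = 1 := by rw [hwg1, hwh1, one_mul]
  inv_mem' := by
    rintro g ⟨hg1, hg2⟩
    have hne : ∀ i, (g : SpecialLinearGroup (Fin n) F).val i i ≠ 0 := by
      intro i h0
      obtain ⟨w, _, hw⟩ := (hg2 i).2
      rw [h0, zero_mul] at hw
      exact one_ne_zero hw.symm
    have hσ2 : ∀ i j, j ≠ i → (g : SpecialLinearGroup (Fin n) F).val i j = 0 :=
      fun i j hj => hg1 i j (Ne.symm hj)
    have hginv : ((g⁻¹ : ↥(monomialSubgroup F n)) : SpecialLinearGroup (Fin n) F)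
        = (g : SpecialLinearGroup (Fin n) F)⁻¹ := rfl
    have key : ∀ i j, (g : SpecialLinearGroup (Fin n) F).val i i
        * ((g⁻¹ : ↥(monomialSubgroup F n)) : SpecialLinearGroup (Fin n) F).val i j
        = (1 : Matrix (Fin n) (Fin n) F) i j := by
      intro i j
      rw [hginv]
      exact mul_inv_entry (σ := 1) (g : SpecialLinearGroup (Fin n) F)
        (fun i j hj => hσ2 i j (by simpa using hj)) i j
    constructor
    · intro i j hij
      have h := key i j
      rw [Matrix.one_apply_ne hij] at h
      rcases mul_eq_zero.1 h with h' | h'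
      · exact absurd h' (hne i)
      · exact h'
    · intro i
      have hii := key i i
      rw [Matrix.one_apply_eq] at hii
      obtain ⟨w, hw, hw1⟩ := (hg2 i).2
      have hwinv : ((g⁻¹ : ↥(monomialSubgroup F n)) : SpecialLinearGroup (Fin n) F).val i i
          = w := mul_left_cancel₀ (hne i) (by rw [hii, hw1])
      refine ⟨hwinv ▸ hw, (g : SpecialLinearGroup (Fin n) F).val i i, (hg2 i).1, ?_⟩
      rw [mul_comm] at hii
      exact hii

instance diagTSubgroup_normal : (diagTSubgroup F n R).Normal := by
  constructor
  rintro d ⟨hd1, hd2⟩ g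
  obtain ⟨σ, hσ1, hσ2⟩ := g.2
  have hginv : ((g⁻¹ : ↥(monomialSubgroup F n)) : SpecialLinearGroup (Fin n) F)
      = ((g : SpecialLinearGroup (Fin n) F))⁻¹ := rfl
  have keyinv := fun i j => mul_inv_entry (g : SpecialLinearGroup (Fin n) F) hσ2 i j
  have hginv0 : ∀ l j, j ≠ σ⁻¹ l →
      ((g : SpecialLinearGroup (Fin n) F)⁻¹).val l j = 0 := by
    intro l j hj
    have h := keyinv (σ⁻¹ l) j
    rw [show σ (σ⁻¹ l) = l from Equiv.apply_symm_apply σ l] at h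
    rw [Matrix.one_apply_ne' hj] at h
    have hσ1' : (g : SpecialLinearGroup (Fin n) F).val (σ⁻¹ l) l ≠ 0 := by
      have h2 := hσ1 (σ⁻¹ l)
      rwa [show σ (σ⁻¹ l) = l from Equiv.apply_symm_apply σ l] at h2
    rcases mul_eq_zero.1 h with h' | h'
    · exact absurd h' hσ1'
    · exact h'
  have hentry : ∀ i j,
      ((g * d * g⁻¹ : ↥(monomialSubgroup F n)) : SpecialLinearGroup (Fin n) F).val i j
      = (g : SpecialLinearGroup (Fin n) F).val i (σ i)
        * (d : SpecialLinearGroup (Fin n) F).val (σ i) (σ i)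
        * ((g : SpecialLinearGroup (Fin n) F)⁻¹).val (σ i) j := by
    intro i j
    have hco : ((g * d * g⁻¹ : ↥(monomialSubgroup F n)) : SpecialLinearGroup (Fin n) F).val
        = (g : SpecialLinearGroup (Fin n) F).val
          * (d : SpecialLinearGroup (Fin n) F).val
          * ((g : SpecialLinearGroup (Fin n) F)⁻¹).val := by
      show ((g : SpecialLinearGroup (Fin n) F) * (d : SpecialLinearGroup (Fin n) F)
        * ((g : SpecialLinearGroup (Fin n) F))⁻¹).val = _
      rw [Matrix.SpecialLinearGroup.coe_mul, Matrix.SpecialLinearGroup.coe_mul]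
    rw [hco]
    have hgd : ∀ j', ((g : SpecialLinearGroup (Fin n) F).val
        * (d : SpecialLinearGroup (Fin n) F).val) i j'
        = (g : SpecialLinearGroup (Fin n) F).val i (σ i)
          * (d : SpecialLinearGroup (Fin n) F).val (σ i) j' :=
      fun j' => mul_entry hσ2 i j'
    rw [Matrix.mul_apply]
    refine (Finset.sum_eq_single (σ i) (fun l _ hl => ?_)
      (fun hf => absurd (Finset.mem_univ _) hf)).trans (by rw [hgd (σ i)])
    rw [hgd l, hd1 (σ i) l (fun h => hl h.symm), mul_zero, zero_mul]
  constructor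
  · intro i j hij
    rw [hentry, hginv0 (σ i) j (by simpa using hij.symm), mul_zero]
  · intro i
    have h1 : ((g * d * g⁻¹ : ↥(monomialSubgroup F n)) : SpecialLinearGroup (Fin n) F).val i i
        = (d : SpecialLinearGroup (Fin n) F).val (σ i) (σ i) := by
      rw [hentry]
      have h2 := keyinv i i
      rw [Matrix.one_apply_eq] at h2
      calc (g : SpecialLinearGroup (Fin n) F).val i (σ i)
            * (d : SpecialLinearGroup (Fin n) F).val (σ i) (σ i)
            * ((g : SpecialLinearGroup (Fin n) F)⁻¹).val (σ i) i
          = (d : SpecialLinearGroup (Fin n) F).val (σ i) (σ i)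
            * ((g : SpecialLinearGroup (Fin n) F).val i (σ i)
              * ((g : SpecialLinearGroup (Fin n) F)⁻¹).val (σ i) i) := by ring
        _ = (d : SpecialLinearGroup (Fin n) F).val (σ i) (σ i) := by rw [h2, mul_one]
    rw [h1]
    exact hd2 (σ i)

end Generic


variable (k : Type) [Field k]

lemma t_ne_zero : t k ≠ 0 := HahnSeries.single_ne_zero one_ne_zero

lemma one_ne_zero' : (1 : K k) ≠ 0 := by
  have h : ∀ (F : Type) [Field F], (1 : F) ≠ 0 := fun F _ => one_ne_zero
  exact h (K k)

lemma neg_ne_zero' (x : K k) (h : x ≠ 0) : -x ≠ 0 := neg_ne_zero (a := x) |>.2 h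

lemma inv_ne_zero' (x : K k) (h : x ≠ 0) : x⁻¹ ≠ 0 := inv_ne_zero (a := x) h

lemma u_ne_zero : u k ≠ 0 := HahnSeries.C_ne_zero (HahnSeries.single_ne_zero one_ne_zero)

/-- The matrix `w₀ = [[0,1],[−1,0]]` as an element of `SL(2, K)`. -/
def w0SL : SpecialLinearGroup (Fin 2) (K k) :=
  ⟨!![0, 1; -1, 0], by norm_num [Matrix.det_fin_two_of]⟩

/-- The matrix `w₁ = [[0,t],[−t⁻¹,0]]` as an element of `SL(2, K)`. -/
def w1SL : SpecialLinearGroup (Fin 2) (K k) :=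
  ⟨!![0, t k; -(t k)⁻¹, 0], by
    rw [Matrix.det_fin_two_of]
    calc (0 : K k) * 0 - t k * -(t k)⁻¹ = t k * (t k)⁻¹ := by ring
      _ = 1 := mul_inv_cancel₀ (a := t k) (t_ne_zero k)⟩

/-- The matrix `w₂ = [[0,u],[−u⁻¹,0]]` as an element of `SL(2, K)`. -/
def w2SL : SpecialLinearGroup (Fin 2) (K k) :=
  ⟨!![0, u k; -(u k)⁻¹, 0], by
    rw [Matrix.det_fin_two_of]
    calc (0 : K k) * 0 - u k * -(u k)⁻¹ = u k * (u k)⁻¹ := by ring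
      _ = 1 := mul_inv_cancel₀ (a := u k) (u_ne_zero k)⟩

lemma antidiag_mem_monomial (a b : K k) (ha : a ≠ 0) (hb : b ≠ 0)
    (g : SpecialLinearGroup (Fin 2) (K k)) (hg : g.val = !![0, a; b, 0]) :
    g ∈ monomialSubgroup (K k) 2 := by
  refine ⟨Equiv.swap 0 1, ?_, ?_⟩
  · rw [Fin.forall_fin_two, Equiv.swap_apply_left, Equiv.swap_apply_right, hg]
    exact ⟨ha, hb⟩
  · rw [Fin.forall_fin_two, Equiv.swap_apply_left, Equiv.swap_apply_right]
    constructor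
    · rw [Fin.forall_fin_two]
      refine ⟨fun h => ?_, fun h => absurd rfl h⟩
      rw [hg]; rfl
    · rw [Fin.forall_fin_two]
      refine ⟨fun h => absurd rfl h, fun h => ?_⟩
      rw [hg]; rfl

/-- `w₀` as an element of the subgroup `N` of monomial matrices. -/
def w0N : ↥(monomialSubgroup (K k) 2) :=
  ⟨w0SL k, antidiag_mem_monomial k 1 (-1) (one_ne_zero' k) (neg_ne_zero' k 1 (one_ne_zero' k)) _ rfl⟩

/-- `w₁` as an element of the subgroup `N` of monomial matrices. -/
def w1N : ↥(monomialSubgroup (K k) 2) :=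
  ⟨w1SL k, antidiag_mem_monomial k (t k) (-(t k)⁻¹) (t_ne_zero k)
    (neg_ne_zero' k (t k)⁻¹ (inv_ne_zero' k (t k) (t_ne_zero k))) _ rfl⟩

/-- `w₂` as an element of the subgroup `N` of monomial matrices. -/
def w2N : ↥(monomialSubgroup (K k) 2) :=
  ⟨w2SL k, antidiag_mem_monomial k (u k) (-(u k)⁻¹) (u_ne_zero k)
    (neg_ne_zero' k (u k)⁻¹ (inv_ne_zero' k (u k) (u_ne_zero k))) _ rfl⟩

/-- The Weyl group `W = N/T` of `SL(2, K)`. -/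
abbrev Weyl := ↥(monomialSubgroup (K k) 2) ⧸ diagTSubgroup (K k) 2 (Oprime k)

/-- The relations `w₀² = w₁² = w₂² = e`, `(w₀w₁w₂)² = e`. -/
def weylRels : Set (FreeGroup (Fin 3)) :=
  {FreeGroup.of 0 * FreeGroup.of 0, FreeGroup.of 1 * FreeGroup.of 1,
    FreeGroup.of 2 * FreeGroup.of 2,
    (FreeGroup.of 0 * FreeGroup.of 1 * FreeGroup.of 2) ^ 2}


/-! ### Auxiliary material for the presentation theorem -/

section GenericGroupAux
variable {G : Type*} [Group G] {a b c : G}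

lemma sq_swallow (h : a * a = 1) : ∀ x : G, a * (a * x) = x := fun x => by
  rw [← mul_assoc, h, one_mul]

lemma inv_of_invol (h : a * a = 1) : a⁻¹ = a := inv_eq_of_mul_eq_one_right h

lemma key_eq (h0 : a*a = 1) (h1 : b*b = 1) (h2 : c*c = 1)
    (hc : (a*b*c)^2 = 1) : a * (b * c) = c * (b * a) := by
  have hc' : (a*b*c) * (a*b*c) = 1 := by rw [← _root_.pow_two]; exact hc
  have h := inv_eq_of_mul_eq_one_right hc'
  rw [_root_.mul_inv_rev, _root_.mul_inv_rev, inv_of_invol h0, inv_of_invol h1, inv_of_invol h2] at h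
  simp only [mul_assoc] at h ⊢
  exact h.symm

lemma W_eq (h0 : a*a = 1) (h1 : b*b = 1) (h2 : c*c = 1)
    (hc : (a*b*c)^2 = 1) : b * (a * c) = c * (a * b) := by
  have key := key_eq h0 h1 h2 hc
  have hc' : (a*b*c) * (a*b*c) = 1 := by rw [← _root_.pow_two]; exact hc
  have hcf : a * (b * (c * (a * (b * c)))) = 1 := by
    simpa only [mul_assoc] using hc'
  have E1 : b * (c * (a * (b * c))) = a := by
    have := congrArg (fun x => a * x) hcf
    simpa only [sq_swallow h0, mul_one] using this
  have E2 : c * (a * (b * c)) = b * a := by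
    have := congrArg (fun x => b * x) E1
    simpa only [sq_swallow h1, mul_one] using this
  have E3 := congrArg (fun x => x * c) E2
  simp only [mul_assoc, h2, mul_one] at E3
  exact E3.symm

lemma comm_BA (h0 : a*a = 1) (h1 : b*b = 1) (h2 : c*c = 1)
    (hc : (a*b*c)^2 = 1) : (b*a) * (c*a) = (c*a) * (b*a) := by
  have W := W_eq h0 h1 h2 hc
  have := congrArg (fun x => x * a) W
  simpa only [mul_assoc] using this

lemma conj_A (h0 : a*a = 1) (h1 : b*b = 1) : a * (b*a) * a⁻¹ = (b*a)⁻¹ := by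
  rw [inv_of_invol h0, _root_.mul_inv_rev, inv_of_invol h0, inv_of_invol h1]
  simp only [mul_assoc, h0, mul_one]

lemma swap_pow (h0 : a*a = 1) (h1 : b*b = 1) (h2 : c*c = 1) (m n : ℤ) :
    a * ((b*a)^m * (c*a)^n) = (b*a)^(-m) * (c*a)^(-n) * a := by
  have hconj : ∀ x : G, MulAut.conj a x = a * x * a⁻¹ := fun x => rfl
  have h := map_mul (MulAut.conj a) ((b*a)^m) ((c*a)^n)
  rw [map_zpow, map_zpow, hconj, hconj, hconj, conj_A h0 h1, conj_A h0 h2] at h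
  have h' : a * ((b*a)^m * (c*a)^n) * a⁻¹ = (b*a)^(-m) * (c*a)^(-n) := by
    rw [h, _root_.inv_zpow, _root_.inv_zpow, ← _root_.zpow_neg, ← _root_.zpow_neg]
  calc a * ((b*a)^m * (c*a)^n)
      = a * ((b*a)^m * (c*a)^n) * a⁻¹ * a := by group
    _ = (b*a)^(-m) * (c*a)^(-n) * a := by rw [h']

lemma normal_form (h0 : a*a = 1) (h1 : b*b = 1) (h2 : c*c = 1)
    (hc : (a*b*c)^2 = 1) (hgen : Subgroup.closure ({a, b, c} : Set G) = ⊤) (x : G) :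
    ∃ (m n : ℤ) (ε : Bool), x = (b*a)^m * (c*a)^n * (cond ε a 1) := by
  have hcomm : Commute (b*a) (c*a) := comm_BA h0 h1 h2 hc
  have hx : x ∈ Subgroup.closure ({a, b, c} : Set G) := by rw [hgen]; trivial
  induction hx using Subgroup.closure_induction with
  | mem y hy =>
    rcases hy with rfl | rfl | rfl
    · exact ⟨0, 0, true, by simp⟩
    · refine ⟨1, 0, true, ?_⟩
      simp only [_root_.zpow_one, _root_.zpow_zero, mul_one, cond_true]
      rw [mul_assoc, h0, mul_one]
    · refine ⟨0, 1, true, ?_⟩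
      simp only [_root_.zpow_one, _root_.zpow_zero, one_mul, cond_true]
      rw [mul_assoc, h0, mul_one]
  | one => exact ⟨0, 0, false, by simp⟩
  | mul y z _ _ hy hz =>
    obtain ⟨m, n, ε, rfl⟩ := hy
    obtain ⟨p, q, δ, rfl⟩ := hz
    cases ε with
    | false =>
      refine ⟨m + p, n + q, δ, ?_⟩
      simp only [cond_false, mul_one]
      rw [_root_.zpow_add, _root_.zpow_add]
      calc (b*a)^m * (c*a)^n * ((b*a)^p * (c*a)^q * cond δ a 1)
          = (b*a)^m * ((c*a)^n * (b*a)^p) * (c*a)^q * cond δ a 1 := by group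
        _ = (b*a)^m * ((b*a)^p * (c*a)^n) * (c*a)^q * cond δ a 1 := by
            rw [(hcomm.zpow_zpow p n).eq]
        _ = (b*a)^m * (b*a)^p * ((c*a)^n * (c*a)^q) * cond δ a 1 := by group
    | true =>
      refine ⟨m - p, n - q, !δ, ?_⟩
      simp only [cond_true]
      have hsw := swap_pow h0 h1 h2 p q
      calc (b*a)^m * (c*a)^n * a * ((b*a)^p * (c*a)^q * cond δ a 1)
          = (b*a)^m * (c*a)^n * (a * ((b*a)^p * (c*a)^q)) * cond δ a 1 := by group
        _ = (b*a)^m * (c*a)^n * ((b*a)^(-p) * (c*a)^(-q) * a) * cond δ a 1 := by rw [hsw]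
        _ = (b*a)^m * ((c*a)^n * (b*a)^(-p)) * (c*a)^(-q) * (a * cond δ a 1) := by group
        _ = (b*a)^m * ((b*a)^(-p) * (c*a)^n) * (c*a)^(-q) * (a * cond δ a 1) := by
            rw [(hcomm.zpow_zpow (-p) n).eq]
        _ = ((b*a)^m * (b*a)^(-p)) * ((c*a)^n * (c*a)^(-q)) * (a * cond δ a 1) := by group
        _ = (b*a)^(m-p) * (c*a)^(n-q) * (a * cond δ a 1) := by
            rw [← _root_.zpow_add, ← _root_.zpow_add]; ring_nf
        _ = (b*a)^(m-p) * (c*a)^(n-q) * cond (!δ) a 1 := by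
            cases δ
            · simp
            · simp only [cond_true, Bool.not_true, cond_false, h0]
  | inv y _ hy =>
    obtain ⟨m, n, ε, rfl⟩ := hy
    cases ε with
    | false =>
      refine ⟨-m, -n, false, ?_⟩
      simp only [cond_false, mul_one, _root_.mul_inv_rev, ← _root_.zpow_neg]
      exact (hcomm.symm.zpow_zpow (-n) (-m)).eq
    | true =>
      refine ⟨m, n, true, ?_⟩
      simp only [cond_true, _root_.mul_inv_rev, ← _root_.zpow_neg, inv_of_invol h0]
      have hsw := swap_pow h0 h1 h2 (-m) (-n)
      calc a * ((c*a)^(-n) * (b*a)^(-m))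
          = a * ((b*a)^(-m) * (c*a)^(-n)) := by rw [(hcomm.symm.zpow_zpow (-n) (-m)).eq]
        _ = (b*a)^m * (c*a)^n * a := by rw [hsw, neg_neg, neg_neg]

end GenericGroupAux

section NuAux
variable {k}

lemma nu_mul {x y : K k} (hx : x ≠ 0) (hy : y ≠ 0) : nu k (x * y) = nu k x + nu k y := by
  have ho : (x*y).order = x.order + y.order := order_mul hx hy
  have hc : (x*y).coeff ((x*y).order) = x.coeff x.order * y.coeff y.order := by
    rw [ho]
    have := coeff_mul_order_add_order x y
    rwa [leadingCoeff_eq, leadingCoeff_eq] at this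
  have hx' : x.coeff x.order ≠ 0 := fun h => hx (coeff_order_eq_zero.1 h)
  have hy' : y.coeff y.order ≠ 0 := fun h => hy (coeff_order_eq_zero.1 h)
  unfold nu
  rw [show ((x*y).coeff ((x*y).order)).order
      = (x.coeff x.order).order + (y.coeff y.order).order by
    rw [hc]; exact order_mul hx' hy', ho]
  rfl

lemma nu_one : nu k (1 : K k) = 0 := by
  unfold nu
  rw [HahnSeries.order_one, show (1 : K k).coeff 0 = 1 by simp, HahnSeries.order_one]
  rfl

lemma nu_neg {x : K k} : nu k (-x) = nu k x := by
  unfold nu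
  rw [HahnSeries.order_neg, HahnSeries.coeff_neg, HahnSeries.order_neg]

lemma nu_t : nu k (t k) = toLex (1, 0) := by
  unfold nu t
  rw [HahnSeries.order_single one_ne_zero, HahnSeries.coeff_single_same, HahnSeries.order_one]

lemma nu_u : nu k (u k) = toLex (0, 1) := by
  unfold nu u
  rw [HahnSeries.order_C]
  rw [show (HahnSeries.C (HahnSeries.single (1:ℤ) (1:k)) : K k).coeff 0
      = HahnSeries.single (1:ℤ) (1:k) by
    rw [HahnSeries.C_apply, HahnSeries.coeff_single_same]]
  rw [HahnSeries.order_single one_ne_zero]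

lemma nu_inv {x : K k} (hx : x ≠ 0) : nu k x⁻¹ = -nu k x := by
  have h := nu_mul hx (inv_ne_zero (a := x) hx)
  rw [mul_inv_cancel₀ hx, nu_one] at h
  exact eq_neg_of_add_eq_zero_right h.symm

lemma nu_nonneg_of_mem {x : K k} (hx : x ≠ 0) (h : x ∈ Oprime k) : 0 ≤ nu k x := by
  obtain ⟨h1, h2⟩ := h
  have ho : 0 ≤ x.order := order_nonneg_of_support (K1 k) hx h1
  have hgoal : toLex ((0:ℤ),(0:ℤ)) ≤ toLex (x.order, (x.coeff x.order).order) := by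
    rcases lt_or_eq_of_le ho with ho' | ho'
    · exact Prod.Lex.le_iff.2 (Or.inl ho')
    · refine Prod.Lex.le_iff.2 (Or.inr ⟨ho', ?_⟩)
      have hc : x.coeff x.order ≠ 0 := fun h => hx (coeff_order_eq_zero.1 h)
      exact order_nonneg_of_support k hc (by rw [← ho']; exact h2)
  exact hgoal

lemma mem_of_nu_zero {x : K k} (h : nu k x = 0) : x ∈ Oprime k := by
  have h1 : x.order = 0 := congrArg (fun p => (ofLex p).1) h
  have h2 : (x.coeff x.order).order = 0 := congrArg (fun p => (ofLex p).2) h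
  constructor
  · intro n hn
    exact HahnSeries.coeff_eq_zero_of_lt_order (by omega)
  · intro n hn
    rw [← h1]
    exact HahnSeries.coeff_eq_zero_of_lt_order (by omega)

lemma nu_zero_of_unit {x w : K k} (hx : x ∈ Oprime k) (hw : w ∈ Oprime k)
    (hxw : x * w = 1) : nu k x = 0 := by
  have hx0 : x ≠ 0 := left_ne_zero_of_mul_eq_one (M₀ := K k) hxw
  have hw0 : w ≠ 0 := right_ne_zero_of_mul_eq_one (M₀ := K k) hxw
  have hsum : nu k x + nu k w = 0 := by rw [← nu_mul hx0 hw0, hxw, nu_one]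
  have h1 := nu_nonneg_of_mem hx0 hx
  have h2 := nu_nonneg_of_mem hw0 hw
  have hle : nu k x ≤ 0 := by
    calc nu k x = nu k x + nu k w - nu k w := by ring
    _ = -nu k w := by rw [hsum]; ring
    _ ≤ 0 := neg_nonpos_of_nonneg h2
  exact le_antisymm hle h1

end NuAux


section MatrixLayer

def tU : (K k)ˣ := Units.mk0 (t k) (t_ne_zero k)
def uU : (K k)ˣ := Units.mk0 (u k) (u_ne_zero k)

def dSL (c : (K k)ˣ) : SpecialLinearGroup (Fin 2) (K k) :=
  ⟨!![(c : K k), 0; 0, ((c⁻¹ : (K k)ˣ) : K k)], by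
    rw [Matrix.det_fin_two_of]
    have : ((c : K k) * ↑c⁻¹ - 0 * 0) = (c : K k) * ↑c⁻¹ := by ring
    rw [this, ← Units.val_mul, mul_inv_cancel, Units.val_one]⟩

def aSL (a : (K k)ˣ) : SpecialLinearGroup (Fin 2) (K k) :=
  ⟨!![0, (a : K k); -((a⁻¹ : (K k)ˣ) : K k), 0], by
    rw [Matrix.det_fin_two_of]
    have : ((0 : K k) * 0 - (a : K k) * -(↑a⁻¹ : K k)) = (a : K k) * ↑a⁻¹ := by ring
    rw [this, ← Units.val_mul, mul_inv_cancel, Units.val_one]⟩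

variable {k}

/-- `-1` as a unit of `K`. -/
def m1 : (K k)ˣ := ⟨-1, -1, by ring, by ring⟩

lemma m1_val : ((m1 : (K k)ˣ) : K k) = -1 := rfl

lemma m1_mul_m1 : (m1 : (K k)ˣ) * m1 = 1 := Units.ext (by show (-1 : K k) * -1 = 1; ring)

lemma m1_inv : (m1 : (K k)ˣ)⁻¹ = m1 := inv_eq_of_mul_eq_one_right m1_mul_m1


lemma mul2_entry (A B : Matrix (Fin 2) (Fin 2) (K k)) (i j : Fin 2) :
    (A * B) i j = A i 0 * B 0 j + A i 1 * B 1 j := by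
  rw [Matrix.mul_apply, Fin.sum_univ_two]

lemma dSL_mul (c c' : (K k)ˣ) : dSL k c * dSL k c' = dSL k (c * c') := by
  apply Subtype.ext
  show (dSL k c).val * (dSL k c').val = (dSL k (c*c')).val
  refine Matrix.ext fun i j => ?_
  rw [mul2_entry]
  fin_cases i <;> fin_cases j
  · show (c : K k) * ↑c' + 0 * 0 = ↑(c * c')
    rw [Units.val_mul]; ring
  · show (c : K k) * 0 + 0 * ↑c'⁻¹ = 0
    ring
  · show 0 * (c' : K k) + ↑c⁻¹ * 0 = 0
    ring
  · show 0 * 0 + ((c⁻¹ : (K k)ˣ) : K k) * ↑c'⁻¹ = ↑((c * c')⁻¹)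
    rw [_root_.mul_inv_rev, Units.val_mul]; ring

lemma dSL_aSL (c a : (K k)ˣ) : dSL k c * aSL k a = aSL k (c * a) := by
  apply Subtype.ext
  show (dSL k c).val * (aSL k a).val = (aSL k (c*a)).val
  refine Matrix.ext fun i j => ?_
  rw [mul2_entry]
  fin_cases i <;> fin_cases j
  · show (c : K k) * 0 + 0 * -(↑a⁻¹ : K k) = 0
    ring
  · show (c : K k) * ↑a + 0 * 0 = ↑(c * a)
    rw [Units.val_mul]; ring
  · show 0 * 0 + ((c⁻¹ : (K k)ˣ) : K k) * -(↑a⁻¹ : K k) = -(↑((c * a)⁻¹) : K k)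
    rw [_root_.mul_inv_rev, Units.val_mul]; ring
  · show 0 * (a : K k) + ((c⁻¹ : (K k)ˣ) : K k) * 0 = 0
    ring

lemma aSL_dSL (a c : (K k)ˣ) : aSL k a * dSL k c = aSL k (a * c⁻¹) := by
  apply Subtype.ext
  show (aSL k a).val * (dSL k c).val = (aSL k (a * c⁻¹)).val
  refine Matrix.ext fun i j => ?_
  rw [mul2_entry]
  fin_cases i <;> fin_cases j
  · show 0 * (c : K k) + (a : K k) * 0 = 0
    ring
  · show 0 * 0 + (a : K k) * ↑c⁻¹ = ↑(a * c⁻¹)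
    rw [Units.val_mul]; ring
  · show -(↑a⁻¹ : K k) * ↑c + 0 * 0 = -(↑((a * c⁻¹)⁻¹) : K k)
    rw [_root_.mul_inv_rev, inv_inv, Units.val_mul]; ring
  · show -(↑a⁻¹ : K k) * 0 + 0 * ↑c⁻¹ = 0
    ring

lemma aSL_aSL (a b : (K k)ˣ) : aSL k a * aSL k b = dSL k (m1 * (a * b⁻¹)) := by
  apply Subtype.ext
  show (aSL k a).val * (aSL k b).val = (dSL k (m1 * (a * b⁻¹))).val
  refine Matrix.ext fun i j => ?_
  rw [mul2_entry]
  fin_cases i <;> fin_cases j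
  · show 0 * 0 + (a : K k) * -(↑b⁻¹ : K k) = ((m1 * (a * b⁻¹) : (K k)ˣ) : K k)
    rw [Units.val_mul, Units.val_mul, m1_val]; ring
  · show 0 * (b : K k) + (a : K k) * 0 = 0
    ring
  · show -(↑a⁻¹ : K k) * 0 + 0 * -(↑b⁻¹ : K k) = 0
    ring
  · show -(↑a⁻¹ : K k) * ↑b + 0 * 0 = (((m1 * (a * b⁻¹))⁻¹ : (K k)ˣ) : K k)
    rw [_root_.mul_inv_rev, _root_.mul_inv_rev, inv_inv, m1_inv, Units.val_mul, Units.val_mul, m1_val]; ring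

lemma dSL_mem (c : (K k)ˣ) : dSL k c ∈ monomialSubgroup (K k) 2 := by
  refine ⟨1, ?_, ?_⟩
  · rw [Fin.forall_fin_two]
    exact ⟨Units.ne_zero c, Units.ne_zero c⁻¹⟩
  · rw [Fin.forall_fin_two]
    constructor <;> rw [Fin.forall_fin_two]
    · exact ⟨fun h => absurd rfl h, fun _ => rfl⟩
    · exact ⟨fun _ => rfl, fun h => absurd rfl h⟩

/-- diagonal monomial element -/
def dN (c : (K k)ˣ) : ↥(monomialSubgroup (K k) 2) := ⟨dSL k c, dSL_mem c⟩

/-- antidiagonal monomial element -/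
def aN (a : (K k)ˣ) : ↥(monomialSubgroup (K k) 2) :=
  ⟨aSL k a, antidiag_mem_monomial k (a : K k) (-(↑a⁻¹ : K k)) (Units.ne_zero a)
    (neg_ne_zero' k _ (Units.ne_zero a⁻¹)) _ rfl⟩

lemma dN_mul (c c' : (K k)ˣ) : dN c * dN c' = dN (c * c') := Subtype.ext (dSL_mul c c')
lemma dN_aN (c a : (K k)ˣ) : dN c * aN a = aN (c * a) := Subtype.ext (dSL_aSL c a)
lemma aN_dN (a c : (K k)ˣ) : aN a * dN c = aN (a * c⁻¹) := Subtype.ext (aSL_dSL a c)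
lemma aN_aN (a b : (K k)ˣ) : aN a * aN b = dN (m1 * (a * b⁻¹)) := Subtype.ext (aSL_aSL a b)

lemma w0N_eq : w0N k = aN 1 := by
  apply Subtype.ext; apply Subtype.ext
  show (!![0, 1; -1, 0] : Matrix (Fin 2) (Fin 2) (K k)) = !![0, ↑(1 : (K k)ˣ); -(↑(1⁻¹ : (K k)ˣ) : K k), 0]
  rfl

lemma w1N_eq : w1N k = aN (tU k) := by
  apply Subtype.ext; apply Subtype.ext
  rfl

lemma w2N_eq : w2N k = aN (uU k) := by
  apply Subtype.ext; apply Subtype.ext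
  rfl

/-- `dN` as a monoid hom. -/
def dNHom : (K k)ˣ →* ↥(monomialSubgroup (K k) 2) where
  toFun := dN
  map_one' := by
    apply Subtype.ext; apply Subtype.ext
    show (dSL k 1).val = (1 : Matrix (Fin 2) (Fin 2) (K k))
    rw [Matrix.one_fin_two]
    rfl
  map_mul' := fun c c' => (dN_mul c c').symm

end MatrixLayer


section Presentation
variable {k}

lemma nu_m1 : nu k ((m1 : (K k)ˣ) : K k) = 0 := by
  rw [m1_val, show (-1 : K k) = -(1 : K k) from rfl, nu_neg, nu_one]

lemma nu_val_inv (c : (K k)ˣ) : nu k ((c⁻¹ : (K k)ˣ) : K k) = -nu k (c : K k) := by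
  have h1 : ((c⁻¹ : (K k)ˣ) : K k) * (c : K k) = 1 := by
    rw [← Units.val_mul, inv_mul_cancel, Units.val_one]
  have h2 := nu_mul (Units.ne_zero c⁻¹) (Units.ne_zero c)
  rw [h1, nu_one] at h2
  exact eq_neg_of_add_eq_zero_left h2.symm

lemma dN_mem_T {c : (K k)ˣ} (h : nu k (c : K k) = 0) :
    dN c ∈ diagTSubgroup (K k) 2 (Oprime k) := by
  have h1 : (c : K k) ∈ Oprime k := mem_of_nu_zero h
  have h2 : ((c⁻¹ : (K k)ˣ) : K k) ∈ Oprime k :=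
    mem_of_nu_zero (by rw [nu_val_inv, h, neg_zero])
  constructor
  · intro i j hij
    fin_cases i <;> fin_cases j
    · exact absurd rfl hij
    · rfl
    · rfl
    · exact absurd rfl hij
  · intro i
    fin_cases i
    · exact ⟨h1, ((c⁻¹ : (K k)ˣ) : K k), h2, by
        show (c : K k) * ((c⁻¹ : (K k)ˣ) : K k) = 1
        rw [← Units.val_mul, mul_inv_cancel, Units.val_one]⟩
    · exact ⟨h2, (c : K k), h1, by
        show ((c⁻¹ : (K k)ˣ) : K k) * (c : K k) = 1
        rw [← Units.val_mul, inv_mul_cancel, Units.val_one]⟩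

lemma nu_zero_of_dN_mem_T {c : (K k)ˣ}
    (h : dN c ∈ diagTSubgroup (K k) 2 (Oprime k)) : nu k (c : K k) = 0 := by
  obtain ⟨-, h2⟩ := h
  obtain ⟨hc, w, hw, hcw⟩ := h2 0
  exact nu_zero_of_unit hc hw hcw

lemma aN_not_mem_T (a : (K k)ˣ) : aN a ∉ diagTSubgroup (K k) 2 (Oprime k) := by
  rintro ⟨-, h2⟩
  obtain ⟨-, w, -, hw⟩ := h2 0
  have h1 : (0 : K k) * w = 1 := hw
  have h0 : (1 : K k) = 0 := by rw [← h1]; ring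
  exact one_ne_zero' k h0

lemma mk_dN_eq_one {c : (K k)ˣ} (h : nu k (c : K k) = 0) :
    (QuotientGroup.mk (dN c) : Weyl k) = 1 :=
  (QuotientGroup.eq_one_iff _).2 (dN_mem_T h)

lemma mk_aN_sq (x : (K k)ˣ) :
    (QuotientGroup.mk (aN x) : Weyl k) * QuotientGroup.mk (aN x) = 1 := by
  rw [← QuotientGroup.mk_mul, aN_aN, mul_inv_cancel, mul_one]
  exact mk_dN_eq_one nu_m1

/-- The images of the three generators in the Weyl group. -/
def fgen : Fin 3 → Weyl k :=
  ![QuotientGroup.mk (w0N k), QuotientGroup.mk (w1N k), QuotientGroup.mk (w2N k)]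

lemma fgen_rels : ∀ r ∈ weylRels, FreeGroup.lift (fgen (k := k)) r = 1 := by
  intro r hr
  have hf0 : FreeGroup.lift (fgen (k := k)) (FreeGroup.of 0) = QuotientGroup.mk (w0N k) :=
    FreeGroup.lift_apply_of
  have hf1 : FreeGroup.lift (fgen (k := k)) (FreeGroup.of 1) = QuotientGroup.mk (w1N k) :=
    FreeGroup.lift_apply_of
  have hf2 : FreeGroup.lift (fgen (k := k)) (FreeGroup.of 2) = QuotientGroup.mk (w2N k) :=
    FreeGroup.lift_apply_of
  simp only [weylRels, Set.mem_insert_iff, Set.mem_singleton_iff] at hr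
  rcases hr with rfl | rfl | rfl | rfl
  · rw [_root_.map_mul, hf0, w0N_eq]; exact mk_aN_sq 1
  · rw [_root_.map_mul, hf1, w1N_eq]; exact mk_aN_sq (tU k)
  · rw [_root_.map_mul, hf2, w2N_eq]; exact mk_aN_sq (uU k)
  · rw [_root_.map_pow, _root_.map_mul, _root_.map_mul, hf0, hf1, hf2, w0N_eq, w1N_eq, w2N_eq,
      ← QuotientGroup.mk_mul, ← QuotientGroup.mk_mul, aN_aN, dN_aN, pow_two]
    exact mk_aN_sq _

/-- The homomorphism from the presented group to the Weyl group. -/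
def phi : PresentedGroup (weylRels) →* Weyl k := PresentedGroup.toGroup fgen_rels

lemma phi_of0 : phi (k := k) (PresentedGroup.of 0) = QuotientGroup.mk (w0N k) :=
  PresentedGroup.toGroup.of fgen_rels
lemma phi_of1 : phi (k := k) (PresentedGroup.of 1) = QuotientGroup.mk (w1N k) :=
  PresentedGroup.toGroup.of fgen_rels
lemma phi_of2 : phi (k := k) (PresentedGroup.of 2) = QuotientGroup.mk (w2N k) :=
  PresentedGroup.toGroup.of fgen_rels

/-- `ν` as a homomorphism on units. -/
def nuHom : (K k)ˣ →* Multiplicative (ℤ ×ₗ ℤ) where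
  toFun c := Multiplicative.ofAdd (nu k (c : K k))
  map_one' := by
    show Multiplicative.ofAdd (nu k ((1 : (K k)ˣ) : K k)) = 1
    rw [Units.val_one, nu_one]
    rfl
  map_mul' c c' := by
    show Multiplicative.ofAdd (nu k (((c * c' : (K k)ˣ)) : K k)) = _
    rw [Units.val_mul, nu_mul (Units.ne_zero c) (Units.ne_zero c')]
    rfl

lemma nuHom_apply (c : (K k)ˣ) : nuHom c = Multiplicative.ofAdd (nu k (c : K k)) := rfl

lemma nu_val_zpow (c : (K k)ˣ) (m : ℤ) : nu k ((c ^ m : (K k)ˣ) : K k) = m • nu k (c : K k) := by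
  have h := _root_.map_zpow (nuHom (k := k)) c m
  rw [nuHom_apply, nuHom_apply, ← ofAdd_zsmul m (nu k (c : K k))] at h
  exact Multiplicative.ofAdd.injective h

lemma nu_m1tU : nu k ((m1 * tU k : (K k)ˣ) : K k) = toLex (1, 0) := by
  rw [Units.val_mul, m1_val,
    show (-1 : K k) * ((tU k : (K k)ˣ) : K k) = -(t k) by
      rw [show ((tU k : (K k)ˣ) : K k) = t k from rfl]; ring,
    nu_neg, nu_t]

lemma nu_m1uU : nu k ((m1 * uU k : (K k)ˣ) : K k) = toLex (0, 1) := by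
  rw [Units.val_mul, m1_val,
    show (-1 : K k) * ((uU k : (K k)ˣ) : K k) = -(u k) by
      rw [show ((uU k : (K k)ˣ) : K k) = u k from rfl]; ring,
    nu_neg, nu_u]

lemma nu_elt (m n : ℤ) :
    nu k (((m1 * tU k) ^ m * (m1 * uU k) ^ n : (K k)ˣ) : K k) = toLex (m, n) := by
  rw [Units.val_mul, nu_mul (Units.ne_zero _) (Units.ne_zero _), nu_val_zpow, nu_val_zpow,
    nu_m1tU, nu_m1uU]
  have h2 : m • (((1:ℤ),(0:ℤ)) : ℤ × ℤ) + n • (((0:ℤ),(1:ℤ)) : ℤ × ℤ) = (m, n) := by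
    simp [Prod.ext_iff]
  exact congrArg toLex h2

lemma dN_inv (c : (K k)ˣ) : (dN c)⁻¹ = dN c⁻¹ := (_root_.map_inv (dNHom (k := k)) c).symm

lemma phi_pow_pow (m n : ℤ) :
    phi (k := k) ((PresentedGroup.of 1 * PresentedGroup.of 0) ^ m
      * (PresentedGroup.of 2 * PresentedGroup.of 0) ^ n)
    = QuotientGroup.mk (dN ((m1 * tU k) ^ m * (m1 * uU k) ^ n)) := by
  have hA : phi (k := k) (PresentedGroup.of 1 * PresentedGroup.of 0)
      = QuotientGroup.mk (dN (m1 * tU k)) := by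
    rw [_root_.map_mul, phi_of1, phi_of0, w1N_eq, w0N_eq, ← QuotientGroup.mk_mul, aN_aN,
      inv_one, mul_one]
  have hB : phi (k := k) (PresentedGroup.of 2 * PresentedGroup.of 0)
      = QuotientGroup.mk (dN (m1 * uU k)) := by
    rw [_root_.map_mul, phi_of2, phi_of0, w2N_eq, w0N_eq, ← QuotientGroup.mk_mul, aN_aN,
      inv_one, mul_one]
  rw [_root_.map_mul, _root_.map_zpow, _root_.map_zpow, hA, hB, ← QuotientGroup.mk_zpow, ← QuotientGroup.mk_zpow,
    ← QuotientGroup.mk_mul]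
  congr 1
  rw [show (dN (m1 * tU k) : ↥(monomialSubgroup (K k) 2)) = dNHom (m1 * tU k) from rfl,
    show (dN (m1 * uU k) : ↥(monomialSubgroup (K k) 2)) = dNHom (m1 * uU k) from rfl,
    ← _root_.map_zpow, ← _root_.map_zpow, ← _root_.map_mul]
  rfl

lemma mono_cases (g : ↥(monomialSubgroup (K k) 2)) :
    (∃ c, g = dN c) ∨ (∃ a, g = aN a) := by
  obtain ⟨σ, hσ1, hσ2⟩ := g.2
  have hdet : g.1.1 0 0 * g.1.1 1 1 - g.1.1 0 1 * g.1.1 1 0 = 1 := by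
    have h := g.1.2
    rw [Matrix.det_fin_two] at h
    exact h
  by_cases h : σ 0 = 0
  · left
    have h1 : σ 1 = 1 := by
      have hne : σ 1 ≠ σ 0 := σ.injective.ne (by decide)
      rw [h] at hne
      omega
    have h01 : g.1.1 0 1 = 0 := hσ2 0 1 (by rw [h]; decide)
    have h10 : g.1.1 1 0 = 0 := hσ2 1 0 (by rw [h1]; decide)
    rw [h01, h10] at hdet
    have hcd : g.1.1 0 0 * g.1.1 1 1 = 1 := by
      calc g.1.1 0 0 * g.1.1 1 1 = g.1.1 0 0 * g.1.1 1 1 - 0 * 0 := by ring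
        _ = 1 := hdet
    refine ⟨⟨g.1.1 0 0, g.1.1 1 1, hcd, (mul_comm (g.1.1 1 1) (g.1.1 0 0)).trans hcd⟩, ?_⟩
    apply Subtype.ext; apply Subtype.ext
    refine Matrix.ext fun i j => ?_
    fin_cases i <;> fin_cases j
    exacts [rfl, h01, h10, rfl]
  · right
    have h0 : σ 0 = 1 := by omega
    have h1 : σ 1 = 0 := by
      have hne : σ 1 ≠ σ 0 := σ.injective.ne (by decide)
      rw [h0] at hne
      omega
    have h00 : g.1.1 0 0 = 0 := hσ2 0 0 (by rw [h0]; decide)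
    have h11 : g.1.1 1 1 = 0 := hσ2 1 1 (by rw [h1]; decide)
    rw [h00, h11] at hdet
    have hab : g.1.1 0 1 * -g.1.1 1 0 = 1 := by
      calc g.1.1 0 1 * -g.1.1 1 0 = 0 * 0 - g.1.1 0 1 * g.1.1 1 0 := by ring
        _ = 1 := hdet
    refine ⟨⟨g.1.1 0 1, -g.1.1 1 0, hab, (mul_comm (-g.1.1 1 0) (g.1.1 0 1)).trans hab⟩, ?_⟩
    apply Subtype.ext; apply Subtype.ext
    refine Matrix.ext fun i j => ?_
    fin_cases i <;> fin_cases j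
    exacts [h00, rfl, (neg_neg (g.1.1 1 0)).symm, h11]

lemma mk_dN_in_range (c : (K k)ˣ) :
    ∃ x, phi (k := k) x = QuotientGroup.mk (dN c) := by
  set m := (ofLex (nu k (c : K k))).1 with hm
  set n := (ofLex (nu k (c : K k))).2 with hn
  set e : (K k)ˣ := (m1 * tU k) ^ m * (m1 * uU k) ^ n with he
  have hnue : nu k (e : K k) = nu k (c : K k) := by
    rw [he, nu_elt m n, hm, hn]
    rfl
  refine ⟨(PresentedGroup.of 1 * PresentedGroup.of 0) ^ m
    * (PresentedGroup.of 2 * PresentedGroup.of 0) ^ n, ?_⟩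
  rw [phi_pow_pow, ← he]
  rw [QuotientGroup.eq]
  rw [dN_inv, dN_mul]
  apply dN_mem_T
  rw [Units.val_mul, nu_mul (Units.ne_zero _) (Units.ne_zero _), nu_val_inv, hnue,
    neg_add_cancel]

lemma phi_surjective : Function.Surjective (phi (k := k)) := by
  intro w
  obtain ⟨g, rfl⟩ := QuotientGroup.mk_surjective w
  rcases mono_cases g with ⟨c, rfl⟩ | ⟨a, rfl⟩
  · exact mk_dN_in_range c
  · obtain ⟨x, hx⟩ := mk_dN_in_range a
    refine ⟨x * PresentedGroup.of 0, ?_⟩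
    rw [_root_.map_mul, hx, phi_of0, w0N_eq, ← QuotientGroup.mk_mul, dN_aN, mul_one]

lemma rel_one {r : FreeGroup (Fin 3)} (hr : r ∈ weylRels) :
    PresentedGroup.mk weylRels r = 1 :=
  (QuotientGroup.eq_one_iff _).2 (Subgroup.subset_normalClosure hr)

lemma sq_of0 : (PresentedGroup.of 0 : PresentedGroup weylRels) * PresentedGroup.of 0 = 1 := by
  rw [show (PresentedGroup.of 0 : PresentedGroup weylRels) * PresentedGroup.of 0
      = PresentedGroup.mk weylRels (FreeGroup.of 0 * FreeGroup.of 0) from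
    (_root_.map_mul _ _ _).symm]
  exact rel_one (by simp [weylRels])

lemma sq_of1 : (PresentedGroup.of 1 : PresentedGroup weylRels) * PresentedGroup.of 1 = 1 := by
  rw [show (PresentedGroup.of 1 : PresentedGroup weylRels) * PresentedGroup.of 1
      = PresentedGroup.mk weylRels (FreeGroup.of 1 * FreeGroup.of 1) from
    (_root_.map_mul _ _ _).symm]
  exact rel_one (by simp [weylRels])

lemma sq_of2 : (PresentedGroup.of 2 : PresentedGroup weylRels) * PresentedGroup.of 2 = 1 := by
  rw [show (PresentedGroup.of 2 : PresentedGroup weylRels) * PresentedGroup.of 2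
      = PresentedGroup.mk weylRels (FreeGroup.of 2 * FreeGroup.of 2) from
    (_root_.map_mul _ _ _).symm]
  exact rel_one (by simp [weylRels])

lemma sq_of012 : ((PresentedGroup.of 0 : PresentedGroup weylRels) * PresentedGroup.of 1
    * PresentedGroup.of 2) ^ 2 = 1 := by
  rw [show ((PresentedGroup.of 0 : PresentedGroup weylRels) * PresentedGroup.of 1
      * PresentedGroup.of 2) ^ 2
      = PresentedGroup.mk weylRels ((FreeGroup.of 0 * FreeGroup.of 1 * FreeGroup.of 2) ^ 2) from
    by rw [_root_.map_pow, _root_.map_mul, _root_.map_mul]; rfl]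
  exact rel_one (by simp [weylRels])

lemma gen_top : Subgroup.closure
    ({PresentedGroup.of 0, PresentedGroup.of 1, PresentedGroup.of 2} :
      Set (PresentedGroup (weylRels))) = ⊤ := by
  rw [← PresentedGroup.closure_range_of weylRels]
  congr 1
  ext x
  simp only [Set.mem_insert_iff, Set.mem_singleton_iff, Set.mem_range]
  constructor
  · rintro (rfl | rfl | rfl)
    · exact ⟨0, rfl⟩
    · exact ⟨1, rfl⟩
    · exact ⟨2, rfl⟩
  · rintro ⟨i, rfl⟩
    fin_cases i
    · exact Or.inl rfl
    · exact Or.inr (Or.inl rfl)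
    · exact Or.inr (Or.inr rfl)

lemma phi_injective : Function.Injective (phi (k := k)) := by
  refine (injective_iff_map_eq_one (phi (k := k))).2 ?_
  intro x hx
  obtain ⟨m, n, ε, rfl⟩ := normal_form sq_of0 sq_of1 sq_of2 sq_of012 gen_top x
  rw [_root_.map_mul, phi_pow_pow] at hx
  cases ε with
  | true =>
    exfalso
    rw [show (cond true (PresentedGroup.of 0) 1 : PresentedGroup weylRels)
        = PresentedGroup.of 0 from rfl, phi_of0, w0N_eq, ← QuotientGroup.mk_mul, dN_aN,
      mul_one] at hx
    exact aN_not_mem_T _ ((QuotientGroup.eq_one_iff _).1 hx)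
  | false =>
    rw [show (cond false (PresentedGroup.of 0) 1 : PresentedGroup weylRels) = 1 from rfl,
      _root_.map_one, mul_one] at hx
    have h0 : nu k (((m1 * tU k) ^ m * (m1 * uU k) ^ n : (K k)ˣ) : K k) = 0 :=
      nu_zero_of_dN_mem_T ((QuotientGroup.eq_one_iff _).1 hx)
    rw [nu_elt] at h0
    have hm : m = 0 := congrArg (fun p => (ofLex p).1) h0
    have hn : n = 0 := congrArg (fun p => (ofLex p).2) h0
    rw [hm, hn]
    simp

end Presentation

/-- For `n = 2` the Weyl group `W = N/T` has the presentation
`⟨w₀, w₁, w₂ | w₀² = w₁² = w₂² = e, (w₀w₁w₂)² = e⟩`: the homomorphism from the presented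
group to `W` sending the generators to the classes of `[[0,1],[−1,0]]`, `[[0,t],[−t⁻¹,0]]`,
`[[0,u],[−u⁻¹,0]]` is an isomorphism. -/
theorem weyl_group_presentation :
    ∃ φ : PresentedGroup (weylRels) →* Weyl k,
      φ (PresentedGroup.of 0) = QuotientGroup.mk (w0N k) ∧
      φ (PresentedGroup.of 1) = QuotientGroup.mk (w1N k) ∧
      φ (PresentedGroup.of 2) = QuotientGroup.mk (w2N k) ∧
      Function.Bijective φ := by
  exact ⟨phi (k := k), phi_of0, phi_of1, phi_of2, phi_injective, phi_surjective⟩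

end TwoDimLocal
end
end
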